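/- Let β ≥ 0, let π^i_v(x) = exp(−βx^j_v)/(exp(−βx^j_l) + exp(−βx^j_r)) for x ∈ Δ×Δ and j = 3−i, and suppose F(x) = −x + π(x) vanishes at x, i.e., x is an equilibrium. If additionally 0 ≤ β ≤ 2, then x = (1/2, 1/2, 1/2, 1/2). -/

import Mathlib

/-- Key inequality: for `t > 0`, `(1-t) e^t < (1+t) e^{-t}`. -/
lemma key_ineq (t : ℝ) (ht : 0 < t) :
    (1 - t) * Real.exp t < (1 + t) * Real.exp (-t) := by
  have hmono : StrictMonoOn
      (fun s : ℝ => (1 + s) * Real.exp (-s) - (1 - s) * Real.exp s) (Set.Ici 0) := by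
    apply strictMonoOn_of_deriv_pos (convex_Ici 0)
    · exact Continuous.continuousOn (by continuity)
    · intro s hs
      rw [interior_Ici] at hs
      have hs' : 0 < s := hs
      have hd : HasDerivAt (fun s : ℝ => (1 + s) * Real.exp (-s) - (1 - s) * Real.exp s)
          (s * (Real.exp s - Real.exp (-s))) s := by
        have h1 : HasDerivAt (fun s : ℝ => (1 + s) * Real.exp (-s))
            (1 * Real.exp (-s) + (1 + s) * (Real.exp (-s) * (-1))) s := by
          exact (((hasDerivAt_id s).const_add 1)).mul
            ((Real.hasDerivAt_exp (-s)).comp s ((hasDerivAt_id s).neg))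
        have h2 : HasDerivAt (fun s : ℝ => (1 - s) * Real.exp s)
            ((-1) * Real.exp s + (1 - s) * Real.exp s) s := by
          have : HasDerivAt (fun s : ℝ => 1 - s) (-1) s := by
            exact (hasDerivAt_id s).const_sub 1
          exact this.mul (Real.hasDerivAt_exp s)
        have := h1.sub h2
        refine this.congr_deriv ?_
        ring
      rw [hd.deriv]
      have hlt : Real.exp (-s) < Real.exp s := Real.exp_lt_exp.2 (by linarith)
      nlinarith
  have h0 : (fun s : ℝ => (1 + s) * Real.exp (-s) - (1 - s) * Real.exp s) 0 <
      (fun s : ℝ => (1 + s) * Real.exp (-s) - (1 - s) * Real.exp s) t :=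
    hmono (by simp) (by simp [ht.le]) ht
  simp [Real.exp_zero] at h0
  linarith

/-- For `0 < u`, `(1-u) e^{2u} < 1+u`. -/
lemma key_ineq2 (u : ℝ) (hu0 : 0 < u) :
    (1 - u) * Real.exp (2 * u) < 1 + u := by
  have := key_ineq u hu0
  have hE := Real.exp_pos u
  have h2 : Real.exp (2 * u) = Real.exp u * Real.exp u := by
    rw [← Real.exp_add]; ring_nf
  have h3 : Real.exp (-u) * Real.exp u = 1 := by
    rw [← Real.exp_add]; simp
  nlinarith

lemma aux_false (β u v : ℝ) (hβ : 0 < β) (hβ2 : β ≤ 2)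
    (hu1 : u < 1) (hv1 : v < 1) (hv1' : -1 < v)
    (h1 : 1 - u = (1 + u) * Real.exp (β * v))
    (h2 : 1 - v = (1 + v) * Real.exp (β * u))
    (hupos : 0 < u) : False := by
  have hEv := Real.exp_pos (β * v)
  have hvneg : v < 0 := by
    by_contra hc
    push_neg at hc
    have : 1 ≤ Real.exp (β * v) := Real.one_le_exp (by positivity)
    nlinarith
  set w := -v with hw
  have hwpos : 0 < w := by rw [hw]; linarith
  have hw1 : w < 1 := by rw [hw]; linarith
  have hmul : Real.exp (β * v) * Real.exp (β * w) = 1 := by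
    rw [← Real.exp_add, show β * v + β * w = 0 by rw [hw]; ring, Real.exp_zero]
  have hEw : (1 - u) * Real.exp (β * w) = 1 + u := by
    linear_combination Real.exp (β * w) * h1 + (1 + u) * hmul
  have hEu : (1 - w) * Real.exp (β * u) = 1 + w := by
    rw [hw]; linear_combination -h2
  have k1 := key_ineq2 u hupos
  have k2 := key_ineq2 w hwpos
  have e1 : Real.exp (2 * u) < Real.exp (β * w) := by
    have h1u : (0:ℝ) < 1 - u := by linarith
    rw [← mul_lt_mul_iff_right₀ h1u]
    calc (1 - u) * Real.exp (2 * u) < 1 + u := k1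
      _ = (1 - u) * Real.exp (β * w) := hEw.symm
  have e2 : Real.exp (2 * w) < Real.exp (β * u) := by
    have h1w : (0:ℝ) < 1 - w := by linarith
    rw [← mul_lt_mul_iff_right₀ h1w]
    calc (1 - w) * Real.exp (2 * w) < 1 + w := k2
      _ = (1 - w) * Real.exp (β * u) := hEu.symm
  have l1 : 2 * u < β * w := Real.exp_lt_exp.1 e1
  have l2 : 2 * w < β * u := Real.exp_lt_exp.1 e2
  nlinarith

theorem equilibrium_unique_of_beta_le_two (β : ℝ) (h0 : 0 ≤ β) (h2 : β ≤ 2)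
    (x : Fin 2 → Fin 2 → ℝ)
    (hnn : ∀ i v, 0 ≤ x i v) (hsum : ∀ i, x i 0 + x i 1 = 1)
    (heq : ∀ i v : Fin 2,
      x i v = Real.exp (-(β * x (1 - i) v)) /
          (Real.exp (-(β * x (1 - i) 0)) + Real.exp (-(β * x (1 - i) 1)))) :
    ∀ i v : Fin 2, x i v = 1/2 := by
  have rel : ∀ p q : ℝ,
      q = Real.exp (-(β * p)) / (Real.exp (-(β * p)) + Real.exp (-(β * (1 - p)))) →
      (1 - q) = q * Real.exp (β * (2 * p - 1)) ∧ 0 < q ∧ q < 1 := by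
    intro p q hq
    have hE1 := Real.exp_pos (-(β * p))
    have hE2 := Real.exp_pos (-(β * (1 - p)))
    have hden : 0 < Real.exp (-(β * p)) + Real.exp (-(β * (1 - p))) := by linarith
    have hmain : q * (Real.exp (-(β * p)) + Real.exp (-(β * (1 - p)))) = Real.exp (-(β * p)) := by
      rw [hq]; field_simp
    have hq0 : 0 < q := by rw [hq]; positivity
    have hq1 : q < 1 := by rw [hq, div_lt_one hden]; linarith
    refine ⟨?_, hq0, hq1⟩
    have hE2eq : Real.exp (-(β * (1 - p))) = Real.exp (β * (2 * p - 1)) * Real.exp (-(β * p)) := by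
      rw [← Real.exp_add]; ring_nf
    have h5 : (1 - q) * Real.exp (-(β * p)) = q * Real.exp (-(β * (1 - p))) := by nlinarith
    rw [hE2eq] at h5
    exact mul_right_cancel₀ (ne_of_gt hE1)
      (by linarith [h5] :
        (1 - q) * Real.exp (-(β * p)) = (q * Real.exp (β * (2 * p - 1))) * Real.exp (-(β * p)))
  set a := x 0 0 with ha
  set b := x 1 0 with hb
  have ha1 : x 0 1 = 1 - a := by have := hsum 0; linarith
  have hb1 : x 1 1 = 1 - b := by have := hsum 1; linarith
  have heqa := heq 0 0
  have heqb := heq 1 0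
  norm_num at heqa heqb
  rw [hb1] at heqa
  rw [ha1] at heqb
  obtain ⟨ra, ha0, haa1⟩ := rel b a heqa
  obtain ⟨rb, hb0, hbb1⟩ := rel a b heqb
  set u := 2 * a - 1 with hu
  set v := 2 * b - 1 with hv
  have h1 : 1 - u = (1 + u) * Real.exp (β * v) := by
    rw [hu, hv]; nlinarith [ra]
  have h1' : 1 - v = (1 + v) * Real.exp (β * u) := by
    rw [hu, hv]; nlinarith [rb]
  have hu1 : u < 1 := by rw [hu]; linarith
  have hu1' : -1 < u := by rw [hu]; linarith
  have hv1 : v < 1 := by rw [hv]; linarith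
  have hv1' : -1 < v := by rw [hv]; linarith
  have huz : u = 0 := by
    rcases eq_or_lt_of_le h0 with hβ0 | hβ
    · rw [← hβ0] at h1
      simp at h1
      linarith
    rcases lt_trichotomy u 0 with hlt | heq0 | hgt
    · exfalso
      have hmul1 : Real.exp (β * v) * Real.exp (β * -v) = 1 := by
        rw [← Real.exp_add, show β * v + β * -v = 0 by ring, Real.exp_zero]
      have hmul2 : Real.exp (β * u) * Real.exp (β * -u) = 1 := by
        rw [← Real.exp_add, show β * u + β * -u = 0 by ring, Real.exp_zero]
      have n1 : 1 - (-u) = (1 + (-u)) * Real.exp (β * -v) := by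
        linear_combination (-Real.exp (β * -v)) * h1 - (1 + u) * hmul1
      have n2 : 1 - (-v) = (1 + (-v)) * Real.exp (β * -u) := by
        linear_combination (-Real.exp (β * -u)) * h1' - (1 + v) * hmul2
      exact aux_false β (-u) (-v) hβ h2 (by linarith) (by linarith) (by linarith) n1 n2
        (by linarith)
    · exact heq0
    · exact absurd (aux_false β u v hβ h2 hu1 hv1 hv1' h1 h1' hgt) not_false
  have hvz : v = 0 := by
    rcases eq_or_lt_of_le h0 with hβ0 | hβ
    · rw [← hβ0] at h1'; simp at h1'; linarith
    · rw [huz] at h1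
      simp at h1
      have hone : Real.exp (β * v) = 1 := by linarith
      have := congrArg Real.log hone
      rw [Real.log_exp, Real.log_one] at this
      rcases mul_eq_zero.mp this with h | h
      · exact absurd h (ne_of_gt hβ)
      · exact h
  have haf : a = 1/2 := by rw [hu] at huz; linarith
  have hbf : b = 1/2 := by rw [hv] at hvz; linarith
  intro i w
  fin_cases i <;> fin_cases w
  · exact haf
  · show x 0 1 = 1/2
    rw [ha1]; linarith
  · exact hbf
  · show x 1 1 = 1/2
    rw [hb1]; linarith
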